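/- For N ≥ 2 and q = 2πm/N with m ∈ ℤ, define the twisted W state |W_q⟩ := (1/√N) Σ_{j=1}^N e^{-iqj} s_j†|0̄⟩. Then on the periodic N-qubit chain: (a) H_ImHop |W_q⟩ = sin(q) |W_q⟩ where H_ImHop = (i/2) Σ_j (s_j† s_{j+1} − s_{j+1}† s_j); and (b) H_ReHop |W_q⟩ = (1 − cos q) |W_q⟩ where H_ReHop = (1/2) Σ_j (s_j† s_j + s_{j+1}† s_{j+1} − s_j† s_{j+1} − s_{j+1}† s_j). Moreover |W_q⟩ is a unit vector. -/

import Mathlib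

open scoped BigOperators

noncomputable section

/-- Configurations of `N` qubits. -/
abbrev Cfg (N : ℕ) := Fin N → Fin 2

/-- The `N`-qubit Hilbert space `⊗_{j=1}^N ℂ²`, identified with `ℂ^(Fin N → Fin 2)`. -/
abbrev QS (N : ℕ) := EuclideanSpace ℂ (Cfg N)

/-- Computational basis state `|t⟩`. -/
def ket {N : ℕ} (t : Cfg N) : QS N := EuclideanSpace.single t 1

/-- Configuration with a single `1` at site `j`. -/
def eConf {N : ℕ} (j : Fin N) : Cfg N := fun k => if k = j then 1 else 0

/-- The all-zero product state `|0̄⟩`. -/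
def zeroKet (N : ℕ) : QS N := ket (fun _ => 0)

/-- The W state `|W⟩ = (1/√N) ∑_j |e_j⟩`. -/
def Wst (N : ℕ) : QS N := (Real.sqrt N : ℂ)⁻¹ • ∑ j : Fin N, ket (eConf j)

/-- Hard-core boson creation operator `s_j† = |1⟩⟨0|` acting at site `j`. -/
def aDag {N : ℕ} (j : Fin N) : QS N →ₗ[ℂ] QS N where
  toFun ψ := WithLp.toLp 2 (fun s => if s j = 1 then ψ (Function.update s j 0) else 0)
  map_add' ψ φ := by ext s; by_cases h : s j = 1 <;> simp [h]
  map_smul' c ψ := by ext s; by_cases h : s j = 1 <;> simp [h]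

/-- Hard-core boson annihilation operator `s_j = |0⟩⟨1|` acting at site `j`. -/
def aOp {N : ℕ} (j : Fin N) : QS N →ₗ[ℂ] QS N where
  toFun ψ := WithLp.toLp 2 (fun s => if s j = 0 then ψ (Function.update s j 1) else 0)
  map_add' ψ φ := by ext s; by_cases h : s j = 0 <;> simp [h]
  map_smul' c ψ := by ext s; by_cases h : s j = 0 <;> simp [h]

/-- Number operator `n_j = s_j† s_j = |1⟩⟨1|_j`. -/
def nOp {N : ℕ} (j : Fin N) : QS N →ₗ[ℂ] QS N := aDag j ∘ₗ aOp j

/-- The imaginary-hopping Hamiltonian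
`H_ImHop = (i/2) ∑_{j=1}^N (s_j† s_{j+1} − s_{j+1}† s_j)` on the periodic chain. -/
def HImHop (N : ℕ) [NeZero N] : QS N →ₗ[ℂ] QS N :=
  (Complex.I / 2) • ∑ j : Fin N, (aDag j ∘ₗ aOp (j + 1) - aDag (j + 1) ∘ₗ aOp j)

/-- The twisted W state `|W_q⟩ = (1/√N) ∑_{j=1}^N e^{-iqj} s_j†|0̄⟩`. -/
def Wq (N : ℕ) (q : ℝ) : QS N :=
  (Real.sqrt N : ℂ)⁻¹ •
    ∑ j : Fin N, Complex.exp (-Complex.I * q * ((j : ℕ) + 1)) • ket (eConf j)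

/-- The real-hopping Hamiltonian
`H_ReHop = (1/2) ∑_j (s_j† s_j + s_{j+1}† s_{j+1} − s_j† s_{j+1} − s_{j+1}† s_j)`. -/
def HReHop (N : ℕ) [NeZero N] : QS N →ₗ[ℂ] QS N :=
  (1 / 2 : ℂ) •
    ∑ j : Fin N, (nOp j + nOp (j + 1) - aDag j ∘ₗ aOp (j + 1) - aDag (j + 1) ∘ₗ aOp j)


namespace WqAux

variable {N : ℕ}

/-- phase coefficient -/
def cf (q : ℝ) {N : ℕ} (j : Fin N) : ℂ := Complex.exp (-Complex.I * q * ((j : ℕ) + 1))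

lemma ket_apply (t s : Cfg N) : ket t s = if s = t then 1 else 0 :=
  EuclideanSpace.single_apply t 1 s

lemma eConf_inj : Function.Injective (eConf (N := N)) := by
  intro j k h
  by_contra hne
  have := congrFun h j
  simp [eConf, hne] at this

lemma aDag_zeroKet (j : Fin N) : aDag j (zeroKet N) = ket (eConf j) := by
  ext s
  show (if s j = 1 then zeroKet N (Function.update s j 0) else 0) = ket (eConf j) s
  rw [ket_apply]
  show (if s j = 1 then ket _ (Function.update s j 0) else 0) = _
  rw [ket_apply]
  by_cases h : s = eConf j
  · subst h
    have h1 : eConf j j = 1 := by simp [eConf]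
    have h2 : Function.update (eConf j) j 0 = (fun _ => (0 : Fin 2)) := by
      funext i; by_cases hi : i = j <;> simp [Function.update, hi, eConf]
    simp [h1, h2]
  · by_cases h1 : s j = 1
    · have h2 : Function.update s j 0 ≠ (fun _ => (0 : Fin 2)) := by
        intro he
        apply h
        funext i
        by_cases hi : i = j
        · subst hi; simp [eConf, h1]
        · have := congrFun he i
          simpa [Function.update, hi, eConf] using this
      simp [h1, h2, h]
    · simp [h1, h]

lemma aOp_ket (k l : Fin N) :
    aOp k (ket (eConf l)) = if k = l then zeroKet N else 0 := by
  ext s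
  show (if s k = 0 then ket (eConf l) (Function.update s k 1) else 0) = _
  rw [ket_apply]
  by_cases hkl : k = l
  · subst hkl
    rw [if_pos rfl]
    show _ = ket _ s
    rw [ket_apply]
    by_cases h0 : s = fun _ => (0 : Fin 2)
    · subst h0
      have h1 : Function.update (fun _ => (0 : Fin 2)) k 1 = eConf k := by
        funext i; by_cases hi : i = k <;> simp [Function.update, hi, eConf]
      simp [h1]
    · by_cases h1 : s k = 0
      · have h2 : Function.update s k 1 ≠ eConf k := by
          intro he
          apply h0
          funext i
          by_cases hi : i = k
          · subst hi; exact h1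
          · have := congrFun he i
            simpa [Function.update, hi, eConf] using this
        simp [h1, h2, h0]
      · simp [h1, h0]
  · rw [if_neg hkl]
    show _ = (0 : QS N) s
    by_cases h1 : s k = 0
    · have h2 : Function.update s k 1 ≠ eConf l := by
        intro he
        have := congrFun he k
        simp [Function.update, eConf, hkl] at this
      simp [h1, h2]
    · simp [h1]

lemma hop_ket (j k l : Fin N) :
    (aDag j ∘ₗ aOp k) (ket (eConf l)) = if k = l then ket (eConf j) else 0 := by
  rw [LinearMap.comp_apply, aOp_ket]
  split <;> simp [aDag_zeroKet]

lemma cf_succ [NeZero N] {q : ℝ} (hq : ∃ m : ℤ, q = 2 * Real.pi * m / N)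
    (j : Fin N) : Complex.exp (-Complex.I * q) * cf q j = cf q (j + 1) := by
  obtain ⟨m, hm⟩ := hq
  have hN0 : (N : ℝ) ≠ 0 := Nat.cast_ne_zero.mpr (NeZero.ne N)
  have hqN : (q * N : ℝ) = 2 * Real.pi * m := by rw [hm, div_mul_cancel₀ _ hN0]
  have hqNC : (q : ℂ) * (N : ℕ) = 2 * (Real.pi : ℂ) * (m : ℤ) := by
    exact_mod_cast congrArg (Complex.ofReal) hqN
  have h1 : Complex.exp (-Complex.I * ((q : ℂ) * (N : ℕ))) = 1 := by
    rw [show -Complex.I * ((q : ℂ) * (N : ℕ)) = (-m : ℤ) * (2 * (Real.pi : ℂ) * Complex.I) by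
      push_cast
      linear_combination (-Complex.I) * hqNC]
    exact Complex.exp_int_mul_two_pi_mul_I _
  set d := ((j : ℕ) + 1) / N with hd
  have hdm : ((j : ℕ) + 1) % N + N * d = (j : ℕ) + 1 := Nat.mod_add_div _ _
  have hval : ((j + 1 : Fin N) : ℕ) = ((j : ℕ) + 1) % N := by
    rw [Fin.add_def]
    simp [Fin.val_one', Nat.add_mod, Nat.mod_mod_of_dvd]
  have h2 : Complex.exp (-Complex.I * ((q : ℂ) * (N : ℕ)) * d) = 1 := by
    rw [show -Complex.I * ((q : ℂ) * (N : ℕ)) * (d : ℕ)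
        = (d : ℕ) * (-Complex.I * ((q : ℂ) * (N : ℕ))) by ring,
      Complex.exp_nat_mul, h1, one_pow]
  have hc : ((((j : ℕ) + 1) % N : ℕ) : ℂ) + (N : ℕ) * (d : ℕ) = ((j : ℕ) : ℂ) + 1 := by
    exact_mod_cast congrArg (Nat.cast (R := ℂ)) hdm
  have key : (-Complex.I * q + -Complex.I * q * (((j : ℕ) : ℂ) + 1))
      = (-Complex.I * q * ((((j + 1 : Fin N) : ℕ) : ℂ) + 1))
        + (-Complex.I * ((q : ℂ) * (N : ℕ)) * d) := by
    rw [hval]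
    linear_combination (Complex.I * (q : ℂ)) * hc
  calc Complex.exp (-Complex.I * q) * cf q j
      = Complex.exp (-Complex.I * q + -Complex.I * q * (((j : ℕ) : ℂ) + 1)) := by
        rw [cf, Complex.exp_add]
    _ = Complex.exp (-Complex.I * q * ((((j + 1 : Fin N) : ℕ) : ℂ) + 1))
          * Complex.exp (-Complex.I * ((q : ℂ) * (N : ℕ)) * d) := by rw [key, Complex.exp_add]
    _ = cf q (j + 1) := by rw [h2, mul_one]; rfl

lemma cf_pred [NeZero N] {q : ℝ} (hq : ∃ m : ℤ, q = 2 * Real.pi * m / N)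
    (j : Fin N) : Complex.exp (Complex.I * q) * cf q j = cf q (j - 1) := by
  have h := cf_succ hq (j - 1)
  rw [sub_add_cancel] at h
  rw [← h, ← mul_assoc, ← Complex.exp_add]
  ring_nf
  rw [Complex.exp_zero, one_mul]

lemma cf_norm {q : ℝ} (j : Fin N) : (starRingEnd ℂ) (cf q j) * cf q j = 1 := by
  rw [cf, ← Complex.exp_conj, ← Complex.exp_add]
  rw [show (starRingEnd ℂ) (-Complex.I * q * (((j : ℕ) : ℂ) + 1))
      + (-Complex.I * q * (((j : ℕ) : ℂ) + 1)) = 0 by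
    simp [map_mul, Complex.conj_I, Complex.conj_ofReal, map_add]]
  exact Complex.exp_zero

end WqAux

/-- For `q = 2πm/N`, on the periodic chain:
`H_ImHop |W_q⟩ = sin(q) |W_q⟩`, `H_ReHop |W_q⟩ = (1 − cos q)|W_q⟩`, and `|W_q⟩` is a unit
vector. -/
theorem Wq_dispersion (N : ℕ) [NeZero N] (hN : 2 ≤ N) (q : ℝ)
    (hq : ∃ m : ℤ, q = 2 * Real.pi * m / N) :
    HImHop N (Wq N q) = (Real.sin q : ℂ) • Wq N q
      ∧ HReHop N (Wq N q) = ((1 - Real.cos q : ℝ) : ℂ) • Wq N q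
      ∧ ‖Wq N q‖ = 1 := by
  classical
  open WqAux in
  obtain ⟨m, hm⟩ := hq
  have hq' : ∃ m : ℤ, q = 2 * Real.pi * m / N := ⟨m, hm⟩
  set S : QS N := ∑ j : Fin N, cf q j • ket (eConf j) with hS
  have hWq : Wq N q = (Real.sqrt N : ℂ)⁻¹ • S := rfl
  have T1 : ∀ j k : Fin N, (aDag j ∘ₗ aOp k) S = cf q k • ket (eConf j) := by
    intro j k
    rw [hS, map_sum]
    simp [map_smul, hop_ket, smul_ite, Finset.sum_ite_eq]
  have Tn : ∀ j : Fin N, nOp j S = cf q j • ket (eConf j) := fun j => T1 j j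
  have e1 : Complex.exp (-Complex.I * q) = Complex.cos q - Complex.sin q * Complex.I := by
    rw [show -Complex.I * (q : ℂ) = (-(q : ℂ)) * Complex.I by ring, Complex.exp_mul_I,
      Complex.cos_neg, Complex.sin_neg]
    ring
  have e2 : Complex.exp (Complex.I * q) = Complex.cos q + Complex.sin q * Complex.I := by
    rw [show Complex.I * (q : ℂ) = (q : ℂ) * Complex.I by ring, Complex.exp_mul_I]
  have reidx : ∑ j : Fin N, cf q j • ket (eConf (j + 1))
      = ∑ j : Fin N, cf q (j - 1) • ket (eConf j) :=
    Fintype.sum_equiv (Equiv.addRight 1) _ _ (fun x => by simp)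
  have ha : HImHop N (Wq N q) = (Real.sin q : ℂ) • Wq N q := by
    rw [hWq, HImHop, LinearMap.smul_apply, map_smul, LinearMap.sum_apply]
    simp only [LinearMap.sub_apply, T1]
    rw [Finset.sum_sub_distrib, reidx, ← Finset.sum_sub_distrib]
    have step : ∀ j : Fin N, cf q (j + 1) • ket (eConf j) - cf q (j - 1) • ket (eConf j)
        = ((Complex.exp (-Complex.I * q) - Complex.exp (Complex.I * q)) * cf q j)
            • ket (eConf j) := by
      intro j
      rw [← cf_succ hq' j, ← cf_pred hq' j, ← sub_smul]
      ring_nf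
    simp only [step, mul_smul]
    rw [← Finset.smul_sum, ← hS, smul_smul, smul_smul, smul_smul]
    congr 1
    have hsin : Complex.I / 2 * (Complex.exp (-Complex.I * q) - Complex.exp (Complex.I * q))
        = (Real.sin q : ℂ) := by
      rw [e1, e2, Complex.ofReal_sin]
      linear_combination (-(Complex.sin q)) * Complex.I_sq
    rw [← hsin]; ring
  have reidx2 : ∑ j : Fin N, cf q (j + 1) • ket (eConf (j + 1)) = S :=
    Fintype.sum_equiv (Equiv.addRight 1) _ _ (fun x => by simp)
  have hb : HReHop N (Wq N q) = ((1 - Real.cos q : ℝ) : ℂ) • Wq N q := by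
    rw [hWq, HReHop, LinearMap.smul_apply, map_smul, LinearMap.sum_apply]
    simp only [LinearMap.sub_apply, LinearMap.add_apply, Tn, T1]
    rw [Finset.sum_sub_distrib, Finset.sum_sub_distrib, Finset.sum_add_distrib, reidx, reidx2,
      ← hS]
    simp only [← cf_succ hq', ← cf_pred hq', mul_smul]
    rw [← Finset.smul_sum, ← Finset.smul_sum, ← hS]
    have hco : (1 / 2 : ℂ) * (2 - Complex.exp (-Complex.I * q) - Complex.exp (Complex.I * q))
        = ((1 - Real.cos q : ℝ) : ℂ) := by
      rw [e1, e2]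
      push_cast [Complex.ofReal_cos]
      ring
    have hmod : S + S - Complex.exp (-Complex.I * q) • S - Complex.exp (Complex.I * q) • S
        = (2 - Complex.exp (-Complex.I * q) - Complex.exp (Complex.I * q)) • S := by
      module
    rw [hmod, smul_smul, smul_smul, smul_smul]
    congr 1
    rw [← hco]; ring
  have hon : Orthonormal ℂ (fun j : Fin N => ket (eConf j)) := by
    have h0 : Orthonormal ℂ (ket (N := N)) := by
      rw [orthonormal_iff_ite]
      intro i j
      simp [ket, EuclideanSpace.inner_single_left, EuclideanSpace.single_apply, eq_comm]
    exact h0.comp eConf eConf_inj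
  have hSS : (inner ℂ S S : ℂ) = (N : ℂ) := by
    rw [hS, hon.inner_sum]
    simp [cf_norm]
  have hNpos : (0 : ℝ) < N := by
    have : 0 < N := by omega
    exact_mod_cast this
  have hnormS : ‖S‖ = Real.sqrt N := by
    have h3 : ‖S‖ ^ 2 = (N : ℝ) := by
      have h2 := inner_self_eq_norm_sq (𝕜 := ℂ) S
      rw [hSS] at h2
      simpa using h2.symm
    rw [← Real.sqrt_sq (norm_nonneg S), h3]
  have hnorm : ‖Wq N q‖ = 1 := by
    rw [hWq, norm_smul, hnormS, norm_inv, Complex.norm_real, Real.norm_eq_abs,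
      abs_of_nonneg (Real.sqrt_nonneg _),
      inv_mul_cancel₀ (ne_of_gt (Real.sqrt_pos.mpr hNpos))]
  exact ⟨ha, hb, hnorm⟩


end
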